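/- For any full-rank lattice L ⊂ ℝⁿ, any K ∈ Conv_n, and any positive integer m, η(mK, L) ≤ η(K, L). -/

import Mathlib

open MeasureTheory Set Pointwise Filter
open scoped ENNReal

noncomputable section

abbrev Euc (n : ℕ) := EuclideanSpace ℝ (Fin n)

/-- `N(L, K, x) = |L ∩ (K + x)|`. -/
def Ncount {n : ℕ} (L K : Set (Euc n)) (x : Euc n) : ℕ :=
  (L ∩ (x +ᵥ K)).ncard

/-- Covering smoothness `η(K, L)`, where `dens` is the asymptotic density of `L`
(`dens = 1/covol(L)` for a full-rank lattice `L`). -/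
def eta {n : ℕ} (K L : Set (Euc n)) (dens : ℝ) : ℝ≥0∞ :=
  ⨆ x : Euc n, ENNReal.ofReal |(Ncount L K x : ℝ) / ((volume K).toReal * dens) - 1|

/-- The full-rank lattice `g ℤⁿ` (for `g` an invertible matrix). -/
def latticeOf {n : ℕ} (g : Matrix (Fin n) (Fin n) ℝ) : Set (Euc n) :=
  {x | ∃ m : Fin n → ℤ, ∀ i, x i = g.mulVec (fun j => (m j : ℝ)) i}

/-- Membership in `Conv_n`: bounded convex subset of `ℝⁿ` with nonempty interior. -/
def IsConvBody {n : ℕ} (K : Set (Euc n)) : Prop :=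
  Convex ℝ K ∧ Bornology.IsBounded K ∧ (interior K).Nonempty

/-- The translates `ℓ + K`, `ℓ ∈ L`, are pairwise disjoint. -/
def IsPacking {n : ℕ} (L K : Set (Euc n)) : Prop :=
  L.Pairwise fun y z => Disjoint (y +ᵥ K) (z +ᵥ K)

/-- The translates of `K` by `L` cover `ℝⁿ`. -/
def IsCovering {n : ℕ} (L K : Set (Euc n)) : Prop :=
  L + K = univ

/-- Covering radius of `L` with respect to `K`. -/
def rCov {n : ℕ} (K L : Set (Euc n)) : ℝ :=
  sInf {α : ℝ | 0 < α ∧ IsCovering L (α • K)}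

/-- Packing radius of `L` with respect to `K`. -/
def rPack {n : ℕ} (K L : Set (Euc n)) : ℝ :=
  sSup {α : ℝ | 0 < α ∧ IsPacking L (α • K)}

/-- `ρ_K(L)`: ratio of covering and packing radii. -/
def rhoK {n : ℕ} (K L : Set (Euc n)) : ℝ := rCov K L / rPack K L

/-- The construction A lattice `(1/p)·π_p⁻¹(S)`. -/
def constA {n : ℕ} (p : ℕ) (S : Submodule (ZMod p) (Fin n → ZMod p)) : Set (Euc n) :=
  {x | ∃ m : Fin n → ℤ, (fun i => (m i : ZMod p)) ∈ S ∧ ∀ i, x i = (m i : ℝ) / p}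

/-- The lattice `L(S) = (1/p)·g·π_p⁻¹(S)`, for `L = g ℤⁿ`. -/
def latticeOfS {n : ℕ} (g : Matrix (Fin n) (Fin n) ℝ) (p : ℕ)
    (S : Submodule (ZMod p) (Fin n → ZMod p)) : Set (Euc n) :=
  {x | ∃ m : Fin n → ℤ, (fun i => (m i : ZMod p)) ∈ S ∧
    ∀ i, x i = g.mulVec (fun j => (m j : ℝ)) i / p}

/-- `Φ_{K,L}(ε)` for a lattice of covolume `covol`. -/
def Phi {n : ℕ} (K L : Set (Euc n)) (covol ε : ℝ) : ℝ :=
  sSup {v : ℝ | ∃ α : ℝ, 0 < α ∧ v = (volume (α • K)).toReal / covol ∧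
    ENNReal.ofReal ε < eta (α • K) L (1 / covol)}

/-- Discrete smoothness `η_{F_p}(A, S)`. -/
def etaFp {p n : ℕ} (A S : Set (Fin n → ZMod p)) : ℝ :=
  ⨆ x : Fin n → ZMod p,
    |(((x +ᵥ S) ∩ A).ncard : ℝ) / ((S.ncard : ℝ) * (A.ncard : ℝ) / (p : ℝ) ^ n) - 1|

/-- Number of `r`-dimensional subspaces of `F_pⁿ`. -/
def GrCard (p n r : ℕ) : ℕ :=
  Nat.card {S : Submodule (ZMod p) (Fin n → ZMod p) // Module.finrank (ZMod p) S = r}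

/-! ### Auxiliary material for Statement 14 -/

/-- The map `a ↦ g a` from `ℤⁿ` into `ℝⁿ`. -/
def Gv {n : ℕ} (g : Matrix (Fin n) (Fin n) ℝ) (a : Fin n → ℤ) : Euc n :=
  WithLp.toLp 2 (fun i => g.mulVec (fun j => (a j : ℝ)) i)

lemma Gv_inj {n : ℕ} {g : Matrix (Fin n) (Fin n) ℝ} (hg : g.det ≠ 0) :
    Function.Injective (Gv g) := by
  intro a b hab
  have h1 : g.mulVec (fun j => (a j : ℝ)) = g.mulVec (fun j => (b j : ℝ)) :=
    funext fun i => congrArg (fun v : Euc n => v i) hab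
  have h2 : (fun j => (a j : ℝ)) = (fun j => (b j : ℝ)) := by
    have hinj : Function.Injective g.mulVec := by
      have : IsUnit g := (Matrix.isUnit_iff_isUnit_det g).2 (isUnit_iff_ne_zero.2 hg)
      exact Matrix.mulVec_injective_iff_isUnit.2 this
    exact hinj h1
  funext j
  exact_mod_cast congrFun h2 j

lemma coord_le_norm {n : ℕ} (v : Euc n) (i : Fin n) : |v i| ≤ ‖v‖ := by
  rw [EuclideanSpace.norm_eq]
  have h1 : |v i| = Real.sqrt (‖v i‖ ^ 2) := by
    rw [Real.sqrt_sq_eq_abs]; simp [abs_abs]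
  rw [h1]
  apply Real.sqrt_le_sqrt
  exact Finset.single_le_sum (f := fun j => ‖v j‖ ^ 2) (fun j _ => sq_nonneg _) (Finset.mem_univ i)

lemma finite_fiber {n : ℕ} {g : Matrix (Fin n) (Fin n) ℝ} (hg : g.det ≠ 0)
    {S : Set (Euc n)} (hS : Bornology.IsBounded S) (y : Euc n) :
    {a : Fin n → ℤ | Gv g a - y ∈ S}.Finite := by
  obtain ⟨R, hR⟩ := hS.exists_norm_le
  set R' : ℝ := R + ‖y‖ with hR'
  have hbound : ∀ a ∈ {a : Fin n → ℤ | Gv g a - y ∈ S}, ‖Gv g a‖ ≤ R' := by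
    intro a ha
    have := hR _ ha
    calc ‖Gv g a‖ = ‖(Gv g a - y) + y‖ := by rw [sub_add_cancel]
      _ ≤ ‖Gv g a - y‖ + ‖y‖ := norm_add_le _ _
      _ ≤ R + ‖y‖ := by linarith
  have hrec : ∀ a : Fin n → ℤ, (fun j => (a j : ℝ)) = g⁻¹.mulVec (fun i => Gv g a i) := by
    intro a
    have : g⁻¹.mulVec (g.mulVec (fun j => (a j : ℝ))) = (fun j => (a j : ℝ)) := by
      rw [Matrix.mulVec_mulVec, Matrix.nonsing_inv_mul g (isUnit_iff_ne_zero.2 hg),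
        Matrix.one_mulVec]
    rw [← this]
    rfl
  set C : Fin n → ℝ := fun i => (∑ j, |g⁻¹ i j|) * R' with hC
  apply Set.Finite.subset (Set.Finite.pi (fun i : Fin n => Set.finite_Icc (-(⌊C i⌋)) ⌊C i⌋))
  intro a ha
  have hnorm := hbound a ha
  have hcoordR : ∀ j, |Gv g a j| ≤ R' := fun j => le_trans (coord_le_norm _ j) hnorm
  intro i _
  have h1 : |(a i : ℝ)| ≤ C i := by
    have := congrFun (hrec a) i
    rw [this]
    unfold Matrix.mulVec dotProduct
    calc |∑ j, g⁻¹ i j * Gv g a j| ≤ ∑ j, |g⁻¹ i j * Gv g a j| := Finset.abs_sum_le_sum_abs _ _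
      _ ≤ ∑ j, |g⁻¹ i j| * R' := by
          apply Finset.sum_le_sum
          intro j _
          rw [abs_mul]
          exact mul_le_mul_of_nonneg_left (hcoordR j) (abs_nonneg _)
      _ = C i := by simp only [hC, Finset.sum_mul]
  have h2 : (a i : ℝ) ≤ C i := le_trans (le_abs_self _) h1
  have h3 : -(C i) ≤ (a i : ℝ) := by
    have := neg_abs_le ((a i : ℝ)); linarith
  constructor
  · have h4 : -(a i) ≤ ⌊C i⌋ := Int.le_floor.2 (by push_cast; linarith)
    omega
  · exact Int.le_floor.2 h2

lemma ncount_eq {n : ℕ} {g : Matrix (Fin n) (Fin n) ℝ} (hg : g.det ≠ 0)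
    (S : Set (Euc n)) (x : Euc n) :
    Ncount (latticeOf g) S x = Nat.card {a : Fin n → ℤ | Gv g a - x ∈ S} := by
  have himg : latticeOf g ∩ (x +ᵥ S) = Gv g '' {a | Gv g a - x ∈ S} := by
    ext v
    simp only [latticeOf, Set.mem_inter_iff, Set.mem_setOf_eq, Set.mem_image]
    constructor
    · rintro ⟨⟨a, ha⟩, hv⟩
      have hva : v = Gv g a := PiLp.ext fun i => ha i
      refine ⟨a, ?_, hva.symm⟩
      rw [← hva] at *
      rw [Set.mem_vadd_set_iff_neg_vadd_mem, vadd_eq_add, neg_add_eq_sub] at hv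
      exact hv
    · rintro ⟨a, ha, rfl⟩
      refine ⟨⟨a, fun i => rfl⟩, ?_⟩
      rw [Set.mem_vadd_set_iff_neg_vadd_mem, vadd_eq_add, neg_add_eq_sub]
      exact ha
  rw [Ncount, himg, Set.ncard_image_of_injective _ (Gv_inj hg), ← Nat.card_coe_set_eq]

lemma natcard_sigma {ι : Type*} [Fintype ι] (T : ι → Type*) [∀ i, Finite (T i)] :
    Nat.card (Σ i, T i) = ∑ i, Nat.card (T i) := by
  have : ∀ i, Fintype (T i) := fun i => Fintype.ofFinite (T i)
  classical
  simp only [Nat.card_eq_fintype_card, Fintype.card_sigma]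

/-- Division with remainder `a = c + m·b`, as an equivalence. -/
def psiEquiv (n m : ℕ) (hm : 0 < m) : ((Fin n → Fin m) × (Fin n → ℤ)) ≃ (Fin n → ℤ) where
  toFun p := fun i => (p.1 i : ℤ) + m * p.2 i
  invFun a :=
    (fun i => ⟨(a i % m).toNat, by
      have h1 : (0:ℤ) ≤ a i % m := Int.emod_nonneg _ (by exact_mod_cast hm.ne')
      have h2 : a i % m < m := Int.emod_lt_of_pos _ (by exact_mod_cast hm)
      omega⟩,
     fun i => a i / m)
  left_inv := by
    rintro ⟨c, b⟩
    have hmz : (m:ℤ) ≠ 0 := by exact_mod_cast hm.ne'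
    refine Prod.ext (funext fun i => ?_) (funext fun i => ?_)
    · apply Fin.ext
      have h1 : ((c i : ℤ) + m * b i) % m = (c i : ℤ) := by
        rw [Int.add_mul_emod_self_left]
        exact Int.emod_eq_of_lt (by positivity) (by exact_mod_cast (c i).2)
      simp [h1]
    · have h1 : ((c i : ℤ) + m * b i) / m = b i := by
        rw [Int.add_mul_ediv_left _ _ hmz,
          Int.ediv_eq_zero_of_lt (by positivity) (by exact_mod_cast (c i).2), zero_add]
      simpa using h1
  right_inv := by
    intro a
    funext i
    have h1 : (0:ℤ) ≤ a i % m := Int.emod_nonneg _ (by exact_mod_cast hm.ne')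
    have h2 : ((a i % m).toNat : ℤ) = a i % m := Int.toNat_of_nonneg h1
    simp only [h2]
    exact Int.emod_add_mul_ediv _ _

lemma Gv_psi {n m : ℕ} (hm : 0 < m) (g : Matrix (Fin n) (Fin n) ℝ)
    (c : Fin n → Fin m) (b : Fin n → ℤ) :
    Gv g (psiEquiv n m hm (c, b)) = Gv g (fun i => (c i : ℤ)) + (m:ℝ) • Gv g b := by
  refine PiLp.ext fun i => ?_
  have hv : (fun j => ((psiEquiv n m hm (c, b)) j : ℝ))
      = (fun j => (((c j : ℤ) : ℝ))) + (m:ℝ) • (fun j => ((b j : ℝ))) := by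
    funext j
    show (((c j : ℤ) + (m:ℤ) * b j : ℤ) : ℝ) = _
    push_cast
    simp [Pi.add_apply, Pi.smul_apply, smul_eq_mul]
  show g.mulVec (fun j => ((psiEquiv n m hm (c, b)) j : ℝ)) i = _
  rw [hv, Matrix.mulVec_add, Matrix.mulVec_smul]
  simp [Gv, PiLp.add_apply, PiLp.smul_apply, smul_eq_mul]

lemma decomp {n : ℕ} {g : Matrix (Fin n) (Fin n) ℝ} (hg : g.det ≠ 0)
    {K : Set (Euc n)} (hKb : Bornology.IsBounded K) {m : ℕ} (hm : 0 < m) (x : Euc n) :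
    Nat.card {a : Fin n → ℤ | Gv g a - x ∈ (m:ℝ) • K}
      = ∑ c : Fin n → Fin m,
        Nat.card {b : Fin n → ℤ | Gv g b - (m:ℝ)⁻¹ • (x - Gv g (fun i => (c i : ℤ))) ∈ K} := by
  have hm0 : (m:ℝ) ≠ 0 := by exact_mod_cast hm.ne'
  have htrans : ∀ (c : Fin n → Fin m) (b : Fin n → ℤ),
      (Gv g b - (m:ℝ)⁻¹ • (x - Gv g (fun i => (c i : ℤ))) ∈ K)
        ↔ (Gv g (psiEquiv n m hm (c, b)) - x ∈ (m:ℝ) • K) := by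
    intro c b
    rw [Gv_psi hm g c b, Set.mem_smul_set_iff_inv_smul_mem₀ hm0]
    have : (m:ℝ)⁻¹ • (Gv g (fun i => (c i : ℤ)) + (m:ℝ) • Gv g b - x)
        = Gv g b - (m:ℝ)⁻¹ • (x - Gv g (fun i => (c i : ℤ))) := by
      rw [smul_sub, smul_add, inv_smul_smul₀ hm0, smul_sub]
      abel
    rw [this]
  have e1 : {p : (Fin n → Fin m) × (Fin n → ℤ) //
        Gv g p.2 - (m:ℝ)⁻¹ • (x - Gv g (fun i => (p.1 i : ℤ))) ∈ K}
      ≃ {a : Fin n → ℤ // Gv g a - x ∈ (m:ℝ) • K} :=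
    Equiv.subtypeEquiv (psiEquiv n m hm) (fun p => htrans p.1 p.2)
  have e2 := (Equiv.subtypeProdEquivSigmaSubtype
      (fun (c : Fin n → Fin m) (b : Fin n → ℤ) =>
        Gv g b - (m:ℝ)⁻¹ • (x - Gv g (fun i => (c i : ℤ))) ∈ K))
  have hfin : ∀ c : Fin n → Fin m,
      Finite {b : Fin n → ℤ | Gv g b - (m:ℝ)⁻¹ • (x - Gv g (fun i => (c i : ℤ))) ∈ K} :=
    fun c => (finite_fiber hg hKb _).to_subtype
  calc Nat.card {a : Fin n → ℤ | Gv g a - x ∈ (m:ℝ) • K}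
      = Nat.card {p : (Fin n → Fin m) × (Fin n → ℤ) //
          Gv g p.2 - (m:ℝ)⁻¹ • (x - Gv g (fun i => (p.1 i : ℤ))) ∈ K} :=
        (Nat.card_congr e1).symm
    _ = Nat.card (Σ c : Fin n → Fin m,
          {b : Fin n → ℤ // Gv g b - (m:ℝ)⁻¹ • (x - Gv g (fun i => (c i : ℤ))) ∈ K}) :=
        Nat.card_congr e2
    _ = ∑ c : Fin n → Fin m, Nat.card
          {b : Fin n → ℤ | Gv g b - (m:ℝ)⁻¹ • (x - Gv g (fun i => (c i : ℤ))) ∈ K} := by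
        exact @natcard_sigma _ _ _ (fun c => hfin c)

/-- weak monotonicity of the covering smoothness under
integer dilation. -/
theorem statement14 (n : ℕ) (g : Matrix (Fin n) (Fin n) ℝ) (hg : g.det ≠ 0)
    (K : Set (Euc n)) (hK : IsConvBody K) (m : ℕ) (hm : 0 < m) :
    eta ((m : ℝ) • K) (latticeOf g) (1 / |g.det|) ≤ eta K (latticeOf g) (1 / |g.det|) := by
  obtain ⟨-, hKb, hKint⟩ := hK
  set d : ℝ := 1 / |g.det| with hd
  have hd0 : 0 < d := by
    rw [hd]
    positivity
  have hm0 : (0:ℝ) < (m:ℝ) := by exact_mod_cast hm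
  -- volume facts
  have hvolK_pos : 0 < (volume K).toReal := by
    refine ENNReal.toReal_pos
      (ne_of_gt (MeasureTheory.Measure.measure_pos_of_nonempty_interior _ hKint)) ?_
    exact (hKb.measure_lt_top).ne
  set c0 : ℝ := (volume K).toReal * d with hc0
  have hc0pos : 0 < c0 := mul_pos hvolK_pos hd0
  have hvol_smul : (volume ((m:ℝ) • K)).toReal = (m:ℝ) ^ n * (volume K).toReal := by
    rw [Measure.addHaar_smul]
    rw [ENNReal.toReal_mul, ENNReal.toReal_ofReal (abs_nonneg _)]
    congr 1
    rw [finrank_euclideanSpace_fin, abs_pow, abs_of_nonneg hm0.le]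
  -- unfold eta of the dilate, bound each term
  rw [eta]
  apply iSup_le
  intro x
  set E : ℝ≥0∞ := eta K (latticeOf g) d with hE
  -- the translation points
  set y : (Fin n → Fin m) → Euc n :=
    fun c => (m:ℝ)⁻¹ • (x - Gv g (fun i => (c i : ℤ))) with hy
  have hcount : (Ncount (latticeOf g) ((m:ℝ) • K) x : ℝ)
      = ∑ c : Fin n → Fin m, (Ncount (latticeOf g) K (y c) : ℝ) := by
    have h1 := ncount_eq hg ((m:ℝ) • K) x
    rw [h1, decomp hg hKb hm x]
    push_cast
    refine Finset.sum_congr rfl fun c _ => ?_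
    rw [ncount_eq hg K (y c)]
  -- real-number estimate
  have hcard : (Fintype.card (Fin n → Fin m) : ℝ) = (m:ℝ) ^ n := by
    simp [Fintype.card_fun]
  have hden : (volume ((m:ℝ) • K)).toReal * d = (m:ℝ) ^ n * c0 := by
    rw [hvol_smul, hc0]; ring
  have key : |(Ncount (latticeOf g) ((m:ℝ) • K) x : ℝ)
        / ((volume ((m:ℝ) • K)).toReal * d) - 1|
      ≤ (∑ c : Fin n → Fin m, |(Ncount (latticeOf g) K (y c) : ℝ) / c0 - 1|) / (m:ℝ) ^ n := by
    rw [hden, hcount]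
    have hrw : (∑ c : Fin n → Fin m, (Ncount (latticeOf g) K (y c) : ℝ))
          / ((m:ℝ) ^ n * c0) - 1
        = (∑ c : Fin n → Fin m,
            ((Ncount (latticeOf g) K (y c) : ℝ) / c0 - 1)) / (m:ℝ) ^ n := by
      set S : ℝ := ∑ c : Fin n → Fin m, (Ncount (latticeOf g) K (y c) : ℝ) with hS
      have h2 : (∑ c : Fin n → Fin m,
          ((Ncount (latticeOf g) K (y c) : ℝ) / c0 - 1)) = S / c0 - (m:ℝ) ^ n := by
        rw [Finset.sum_sub_distrib, ← Finset.sum_div, Finset.sum_const, Finset.card_univ, ← hS]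
        rw [nsmul_eq_mul, mul_one, hcard]
      rw [h2]
      have hmn : ((m:ℝ) ^ n) ≠ 0 := by positivity
      field_simp
    rw [hrw, abs_div, abs_of_pos (by positivity : (0:ℝ) < (m:ℝ)^n)]
    apply div_le_div_of_nonneg_right ?_ (by positivity)
    · exact Finset.abs_sum_le_sum_abs _ _
  -- pass to ℝ≥0∞
  calc ENNReal.ofReal |(Ncount (latticeOf g) ((m:ℝ) • K) x : ℝ)
        / ((volume ((m:ℝ) • K)).toReal * d) - 1|
      ≤ ENNReal.ofReal ((∑ c : Fin n → Fin m,
          |(Ncount (latticeOf g) K (y c) : ℝ) / c0 - 1|) / (m:ℝ) ^ n) :=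
        ENNReal.ofReal_le_ofReal key
    _ = (∑ c : Fin n → Fin m,
          ENNReal.ofReal |(Ncount (latticeOf g) K (y c) : ℝ) / c0 - 1|)
          / ENNReal.ofReal ((m:ℝ) ^ n) := by
        rw [ENNReal.ofReal_div_of_pos (by positivity),
          ENNReal.ofReal_sum_of_nonneg (fun c _ => abs_nonneg _)]
    _ ≤ E := by
        rw [ENNReal.div_le_iff_le_mul]
        · calc (∑ c : Fin n → Fin m,
              ENNReal.ofReal |(Ncount (latticeOf g) K (y c) : ℝ) / c0 - 1|)
              ≤ ∑ _c : Fin n → Fin m, E := by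
                apply Finset.sum_le_sum
                intro c _
                rw [hE, eta]
                exact le_iSup (fun z => ENNReal.ofReal
                  |(Ncount (latticeOf g) K z : ℝ) / ((volume K).toReal * d) - 1|) (y c)
            _ = (Fintype.card (Fin n → Fin m)) • E := by
                rw [Finset.sum_const, Finset.card_univ]
            _ = E * ENNReal.ofReal ((m:ℝ) ^ n) := by
                rw [nsmul_eq_mul, Fintype.card_fun, Fintype.card_fin, Fintype.card_fin, mul_comm]
                congr 1
                rw [← ENNReal.ofReal_natCast]
                congr 1
                push_cast
                ring
        · left
          exact (ENNReal.ofReal_pos.2 (by positivity)).ne'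
        · left
          exact ENNReal.ofReal_ne_top

end
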